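/- Let E be a directed graph. Define a vertex to be regular if it receives at least one and only finitely many edges, and singular otherwise. The set Y of paths ξ (finite or infinite) such that: for every finite path μ with regular d(μ) and every finite F ⊆ r⁻¹(d(μ)) with F ≠ r⁻¹(d(μ)), if ξ ∈ Z({μ}) ∩ (⋃_{e∈F} Z({μe}))ᶜ then ξ ∈ Z({μe}) for some e ∈ r⁻¹(d(μ)) \ F, is exactly the boundary path space ∂E = {μ ∈ E* : d(μ) singular} ∪ E^∞. -/

import Mathlib

/-- A finite path in a directed graph with vertex set `V`, edge set `E`, domain
map `d` and range map `r`: a chained list of edges `μ₁…μₙ` (with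
`d μᵢ = r μ_{i+1}`) together with its terminal vertex `vert = d μ`; a vertex is
the path with no edges. -/
structure FinPath (V E : Type*) (d r : E → V) where
  vert : V
  edges : List E
  chain : edges.Chain' (fun a b => d a = r b)
  compat : ∀ h : edges ≠ [], d (edges.getLast h) = vert

/-- An infinite path: a chained infinite sequence of edges. -/
structure InfPath (V E : Type*) (d r : E → V) where
  seq : ℕ → E
  chain : ∀ i : ℕ, d (seq i) = r (seq (i + 1))

/-- The space of all finite and infinite paths of a directed graph. -/
def GPath (V E : Type*) (d r : E → V) : Type _ :=
  FinPath V E d r ⊕ InfPath V E d r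

/-- `HasRawPrefix d r p es v` says that the path `p` has the finite path with edge
list `es` and terminal vertex `v` as a prefix. -/
def HasRawPrefix {V E : Type*} (d r : E → V) (p : GPath V E d r)
    (es : List E) (v : V) : Prop :=
  Sum.elim
    (fun ξ : FinPath V E d r =>
      es <+: ξ.edges ∧
      (∀ h : es.length < ξ.edges.length, v = r (ξ.edges.get ⟨es.length, h⟩)) ∧
      (es.length = ξ.edges.length → v = ξ.vert))
    (fun g : InfPath V E d r =>
      (∀ (i : ℕ) (h : i < es.length), es.get ⟨i, h⟩ = g.seq i) ∧ v = r (g.seq es.length))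
    p

/-- The cylinder set `Z({μ})` of all paths with prefix `μ`. -/
def ZP {V E : Type*} (d r : E → V) (μ : FinPath V E d r) : Set (GPath V E d r) :=
  {p | HasRawPrefix d r p μ.edges μ.vert}

/-- The cylinder set `Z({μe})` of all paths with prefix the extension of `μ` by
the edge `e`. -/
def ZPe {V E : Type*} (d r : E → V) (μ : FinPath V E d r) (e : E) :
    Set (GPath V E d r) :=
  {p | HasRawPrefix d r p (μ.edges ++ [e]) (d e)}

/-- The basic set `Z({μ}) ∩ (⋃_{e ∈ F} Z({μe}))ᶜ`. -/
def ZB {V E : Type*} (d r : E → V) (μ : FinPath V E d r) (F : Set E) :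
    Set (GPath V E d r) :=
  ZP d r μ ∩ (⋃ e ∈ F, ZPe d r μ e)ᶜ

/-- A vertex is regular if it receives at least one and only finitely many edges. -/
def IsRegularV {V E : Type*} (d r : E → V) (v : V) : Prop :=
  {e | r e = v}.Nonempty ∧ {e | r e = v}.Finite

/-- the set of paths `ξ` such that, for every finite path `μ` with
regular terminal vertex and every finite `F ⊆ r⁻¹(d μ)` with `F ≠ r⁻¹(d μ)`, if
`ξ ∈ Z({μ}) ∩ (⋃_{e∈F} Z({μe}))ᶜ` then `ξ ∈ Z({μe})` for some
`e ∈ r⁻¹(d μ) \ F`, is exactly the boundary path space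
`∂E = {μ ∈ E* : d μ singular} ∪ E^∞`. -/
theorem stmt_15 {V E : Type*} (d r : E → V) :
    {ξ : GPath V E d r |
      ∀ (μ : FinPath V E d r) (F : Set E), IsRegularV d r μ.vert →
        F ⊆ {e | r e = μ.vert} → F.Finite → F ≠ {e | r e = μ.vert} →
        ξ ∈ ZB d r μ F →
        ∃ e, r e = μ.vert ∧ e ∉ F ∧ ξ ∈ ZPe d r μ e} =
    {ξ : GPath V E d r |
      ∀ μ : FinPath V E d r, ξ = Sum.inl μ → ¬ IsRegularV d r μ.vert} := by
  ext ξ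
  simp only [Set.mem_setOf_eq]
  constructor
  · -- forward: satisfies the property → boundary path
    intro hξ ν hν hreg
    have hne : (∅ : Set E) ≠ {e | r e = ν.vert} := fun h => hreg.1.ne_empty h.symm
    subst hν
    have hmemZB : Sum.inl ν ∈ ZB d r ν ∅ :=
      ⟨⟨List.prefix_refl _, fun h => absurd h (lt_irrefl _), fun _ => rfl⟩, by simp; exact Set.mem_univ _⟩
    obtain ⟨e, -, -, he⟩ := hξ ν ∅ hreg (by simp) Set.finite_empty hne hmemZB
    have hl := he.1.length_le
    simp at hl
  · -- backward: boundary path → satisfies property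
    intro hξ μ F hreg hFsub hFfin hFne hmem
    obtain ⟨hZP, hcomp⟩ := hmem
    cases ξ with
    | inl ν =>
      obtain ⟨hpre, h2, h3⟩ := hZP
      have hsing := hξ ν rfl
      have hlt : μ.edges.length < ν.edges.length := by
        rcases lt_or_eq_of_le hpre.length_le with h | h
        · exact h
        · exact absurd (h3 h ▸ hreg) hsing
      set e := ν.edges.get ⟨μ.edges.length, hlt⟩ with he_def
      have hre : r e = μ.vert := (h2 hlt).symm
      obtain ⟨t, ht⟩ := hpre
      have htne : t ≠ [] := by
        intro h
        subst h
        rw [List.append_nil] at ht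
        rw [ht] at hlt
        exact lt_irrefl _ hlt
      have h0 : 0 < t.length := List.length_pos_iff.mpr htne
      have he_eq : e = t.head htne := by
        have hgl : (μ.edges ++ t)[μ.edges.length]'(by simp [h0]) = t[0]'h0 := by
          rw [List.getElem_append_right (le_refl _)]
          simp
        have hν' : ν.edges[μ.edges.length]'hlt = (μ.edges ++ t)[μ.edges.length]'(by simp [h0]) :=
          List.getElem_of_eq ht.symm _
        rw [he_def]
        simp only [List.get_eq_getElem]
        rw [hν', hgl]
        exact (List.head_eq_getElem_zero htne).symm
      have hprefix : μ.edges ++ [e] <+: ν.edges := by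
        refine ⟨t.tail, ?_⟩
        rw [he_eq, List.append_assoc, List.singleton_append, List.cons_head_tail]
        exact ht
      have hZPe : Sum.inl ν ∈ ZPe d r μ e := by
        refine ⟨hprefix, ?_, ?_⟩
        · intro h
          have hh : μ.edges.length + 1 < ν.edges.length := by
            simpa using h
          have hch := List.isChain_iff_getElem.mp ν.chain μ.edges.length (by omega)
          simp only [List.get_eq_getElem] at hch ⊢
          convert hch using 3 <;> simp [he_def]
        · intro h
          have hh : μ.edges.length + 1 = ν.edges.length := by simpa using h
          have hne' : ν.edges ≠ [] := by
            intro hnil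
            rw [hnil] at hh
            simp at hh
          have hc := ν.compat hne'
          rw [List.getLast_eq_getElem] at hc
          show d (ν.edges[μ.edges.length]'hlt) = ν.vert
          convert hc using 3
          omega
      have heF : e ∉ F := fun hf => hcomp (Set.mem_biUnion hf hZPe)
      exact ⟨e, hre, heF, hZPe⟩
    | inr g =>
      obtain ⟨h1, h2⟩ := hZP
      set e := g.seq μ.edges.length with he_def
      have hre : r e = μ.vert := h2.symm
      have hZPe : Sum.inr g ∈ ZPe d r μ e := by
        refine ⟨?_, ?_⟩
        · intro i h
          have hh : i < μ.edges.length + 1 := by simpa using h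
          simp only [List.get_eq_getElem]
          rcases Nat.lt_or_ge i μ.edges.length with hi | hi
          · rw [List.getElem_append_left hi]
            simpa using h1 i hi
          · have hieq : i = μ.edges.length := by omega
            subst hieq
            rw [List.getElem_append_right (le_refl _)]
            simp
            exact he_def
        · simpa using g.chain μ.edges.length
      have heF : e ∉ F := fun hf => hcomp (Set.mem_biUnion hf hZPe)
      exact ⟨e, hre, heF, hZPe⟩
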